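/- If P is a coherent lower prevision on the bounded gambles on X, then D_P := {f : P(f) > 0} is an Archimedean set of desirable options, and sup{μ ∈ ℝ : P(f − μ) > 0} = P(f) for every gamble f. -/

import Mathlib

/-- The gambles (bounded real-valued maps) on `X`. -/
def Gmb (X : Type*) : Set (X → ℝ) :=
  {f | BddAbove (Set.range f) ∧ BddBelow (Set.range f)}

/-- The gambles with strictly positive infimum. -/
def GmbPos (X : Type*) : Set (X → ℝ) :=
  {f | f ∈ Gmb X ∧ 0 < sInf (Set.range f)}

/-- All finite positive linear combinations of elements of `A`. -/
def PosiG {X : Type*} (A : Set (X → ℝ)) : Set (X → ℝ) :=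
  {w | ∃ n : ℕ, 0 < n ∧ ∃ (l : Fin n → ℝ) (u : Fin n → (X → ℝ)),
    (∀ k, 0 < l k) ∧ (∀ k, u k ∈ A) ∧ w = ∑ k, l k • u k}

/-- Coherence of a set of desirable gambles. -/
def CoherentG {X : Type*} (D : Set (X → ℝ)) : Prop :=
  D ⊆ Gmb X ∧ (0 : X → ℝ) ∉ D ∧ GmbPos X ⊆ D ∧
  ∀ f ∈ D, ∀ g ∈ D, ∀ l m : ℝ, 0 ≤ l → 0 ≤ m → 0 < l + m → l • f + m • g ∈ D

/-- Archimedean set of desirable gambles. -/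
def ArchG {X : Type*} (D : Set (X → ℝ)) : Prop :=
  CoherentG D ∧ ∀ f ∈ D, ∃ ε : ℝ, 0 < ε ∧ (fun x => f x - ε) ∈ D

/-- Mixing set of desirable gambles. -/
def MixG {X : Type*} (D : Set (X → ℝ)) : Prop :=
  CoherentG D ∧ ∀ A : Set (X → ℝ), A.Finite → A ⊆ Gmb X →
    (PosiG A ∩ D).Nonempty → (A ∩ D).Nonempty

/-- The lower prevision associated with a set of desirable gambles. -/
noncomputable def PDfun {X : Type*} (D : Set (X → ℝ)) (f : X → ℝ) : ℝ :=
  sSup {μ : ℝ | (fun x => f x - μ) ∈ D}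

/-- Coherent lower prevision on the gambles on `X`. -/
def CohLP {X : Type*} (P : (X → ℝ) → ℝ) : Prop :=
  (∀ f ∈ Gmb X, sInf (Set.range f) ≤ P f) ∧
  (∀ f ∈ Gmb X, ∀ l : ℝ, 0 < l → P (l • f) = l * P f) ∧
  (∀ f ∈ Gmb X, ∀ g ∈ Gmb X, P f + P g ≤ P (f + g))

/-- Linear prevision on the gambles on `X`. -/
def LinP {X : Type*} (P : (X → ℝ) → ℝ) : Prop :=
  CohLP P ∧ ∀ f ∈ Gmb X, ∀ g ∈ Gmb X, P (f + g) = P f + P g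

/-- The set of desirable gambles associated with a (lower) prevision. -/
def DPset {X : Type*} (P : (X → ℝ) → ℝ) : Set (X → ℝ) :=
  {f | f ∈ Gmb X ∧ 0 < P f}

section Aux

variable {X : Type*}

lemma gmb_const (c : ℝ) : (fun _ : X => c) ∈ Gmb X := by
  constructor
  · exact ⟨c, by rintro y ⟨x, rfl⟩; exact le_rfl⟩
  · exact ⟨c, by rintro y ⟨x, rfl⟩; exact le_rfl⟩

lemma gmb_add {f g : X → ℝ} (hf : f ∈ Gmb X) (hg : g ∈ Gmb X) : f + g ∈ Gmb X := by
  obtain ⟨⟨a, ha⟩, ⟨b, hb⟩⟩ := hf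
  obtain ⟨⟨c, hc⟩, ⟨d, hd⟩⟩ := hg
  constructor
  · exact ⟨a + c, by rintro y ⟨x, rfl⟩; exact add_le_add (ha ⟨x, rfl⟩) (hc ⟨x, rfl⟩)⟩
  · exact ⟨b + d, by rintro y ⟨x, rfl⟩; exact add_le_add (hb ⟨x, rfl⟩) (hd ⟨x, rfl⟩)⟩

lemma gmb_smul {f : X → ℝ} (hf : f ∈ Gmb X) (l : ℝ) (hl : 0 ≤ l) : l • f ∈ Gmb X := by
  obtain ⟨⟨a, ha⟩, ⟨b, hb⟩⟩ := hf
  constructor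
  · exact ⟨l * a, by rintro y ⟨x, rfl⟩; exact mul_le_mul_of_nonneg_left (ha ⟨x, rfl⟩) hl⟩
  · exact ⟨l * b, by rintro y ⟨x, rfl⟩; exact mul_le_mul_of_nonneg_left (hb ⟨x, rfl⟩) hl⟩

lemma sInf_const [Nonempty X] (c : ℝ) : sInf (Set.range (fun _ : X => c)) = c := by
  rw [Set.range_const, csInf_singleton]

lemma P0 {P : (X → ℝ) → ℝ} (hP : CohLP P) : P 0 = 0 := by
  have := hP.2.1 0 (by exact gmb_const (X := X) 0) 2 (by norm_num)
  simp at this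
  linarith

lemma Pconst [Nonempty X] {P : (X → ℝ) → ℝ} (hP : CohLP P) (c : ℝ) :
    P (fun _ : X => c) = c := by
  have h1 := hP.1 _ (gmb_const (X := X) c)
  have h2 := hP.1 _ (gmb_const (X := X) (-c))
  rw [sInf_const] at h1 h2
  have h3 := hP.2.2 _ (gmb_const (X := X) c) _ (gmb_const (X := X) (-c))
  have : (fun _ : X => c) + (fun _ : X => -c) = 0 := by funext x; simp
  rw [this, P0 hP] at h3
  linarith

lemma Psub [Nonempty X] {P : (X → ℝ) → ℝ} (hP : CohLP P) {f : X → ℝ} (hf : f ∈ Gmb X)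
    (μ : ℝ) : P (fun x => f x - μ) = P f - μ := by
  have e0 : (fun x => f x - μ) = f + (fun _ : X => -μ) := by
    funext x; simp [sub_eq_add_neg]
  have hsub : (fun x => f x - μ) ∈ Gmb X := e0 ▸ gmb_add hf (gmb_const (X := X) (-μ))
  have h1 := hP.2.2 f hf _ (gmb_const (X := X) (-μ))
  have e1 : f + (fun _ : X => -μ) = fun x => f x - μ := by funext x; simp [sub_eq_add_neg]
  rw [e1, Pconst hP] at h1
  have h2 := hP.2.2 _ hsub _ (gmb_const (X := X) μ)
  have e2 : (fun x => f x - μ) + (fun _ : X => μ) = f := by funext x; simp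
  rw [e2, Pconst hP] at h2
  linarith
lemma gmb_sub_const {f : X → ℝ} (hf : f ∈ Gmb X) (μ : ℝ) :
    (fun x => f x - μ) ∈ Gmb X := by
  have e0 : (fun x => f x - μ) = f + (fun _ : X => -μ) := by
    funext x; simp [sub_eq_add_neg]
  exact e0 ▸ gmb_add hf (gmb_const (X := X) (-μ))

end Aux

theorem stmt16 {X : Type*} [Nonempty X]
    (P : (X → ℝ) → ℝ) (hP : CohLP P) :
    ArchG (DPset P) ∧
    ∀ f ∈ Gmb X, sSup {μ : ℝ | (fun x => f x - μ) ∈ DPset P} = P f := by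
  constructor
  · constructor
    · refine ⟨fun f hf => hf.1, ?_, ?_, ?_⟩
      · intro h
        have := h.2
        rw [P0 hP] at this
        exact lt_irrefl 0 this
      · rintro f ⟨hf, hpos⟩
        exact ⟨hf, lt_of_lt_of_le hpos (hP.1 f hf)⟩
      · rintro f ⟨hf, hpf⟩ g ⟨hg, hpg⟩ l m hl hm hlm
        rcases eq_or_lt_of_le hl with hl0 | hl0
        · have hm0 : 0 < m := by linarith [hlm]
          have e : l • f + m • g = m • g := by rw [← hl0]; simp
          rw [e]
          exact ⟨gmb_smul hg m hm, by rw [hP.2.1 g hg m hm0]; positivity⟩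
        rcases eq_or_lt_of_le hm with hm0 | hm0
        · have e : l • f + m • g = l • f := by rw [← hm0]; simp
          rw [e]
          exact ⟨gmb_smul hf l hl, by rw [hP.2.1 f hf l hl0]; positivity⟩
        · refine ⟨gmb_add (gmb_smul hf l hl) (gmb_smul hg m hm), ?_⟩
          have h1 := hP.2.2 _ (gmb_smul hf l hl) _ (gmb_smul hg m hm)
          rw [hP.2.1 f hf l hl0, hP.2.1 g hg m hm0] at h1
          have : 0 < l * P f + m * P g := by positivity
          linarith
    · rintro f ⟨hf, hpf⟩
      refine ⟨P f / 2, by positivity, gmb_sub_const hf _, ?_⟩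
      rw [Psub hP hf]; linarith
  · intro f hf
    have e : {μ : ℝ | (fun x => f x - μ) ∈ DPset P} = Set.Iio (P f) := by
      ext μ
      simp only [DPset, Set.mem_setOf_eq, Set.mem_Iio, Psub hP hf]
      constructor
      · rintro ⟨_, h⟩; linarith
      · intro h; exact ⟨gmb_sub_const hf μ, by linarith⟩
    rw [e, csSup_Iio]
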